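/- Let Δ be a subspace of V and ε an alternating bilinear form on Δ. Then L(Δ,ε) := {(v, ξ) ∈ V ⊕ V* : v ∈ Δ and ξ(w) = ε(v, w) for all w ∈ Δ} is a Lagrangian subspace of V ⊕ V*, and its projection to V equals Δ. -/

import Mathlib

/-- The canonical split-signature pairing on `V ⊕ V*`. -/
noncomputable def diracPairing {V : Type*} [AddCommGroup V] [Module ℝ V]
    (x y : V × Module.Dual ℝ V) : ℝ :=
  (x.2 y.1 + y.2 x.1) / 2

/-- `L ⊆ V ⊕ V*` is Lagrangian: `dim L = dim V` and the pairing vanishes on `L`. -/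
def IsLagrangian {V : Type*} [AddCommGroup V] [Module ℝ V]
    (L : Submodule ℝ (V × Module.Dual ℝ V)) : Prop :=
  Module.finrank ℝ L = Module.finrank ℝ V ∧
    ∀ x ∈ L, ∀ y ∈ L, diracPairing x y = 0

/-- The graph submodule `L(Δ,ε)`. -/
def graphL {V : Type*} [AddCommGroup V] [Module ℝ V]
    (Δ : Submodule ℝ V) (ε : Δ →ₗ[ℝ] Δ →ₗ[ℝ] ℝ) :
    Submodule ℝ (V × Module.Dual ℝ V) where
  carrier := {p | ∃ h : p.1 ∈ Δ, ∀ w : Δ, p.2 w = ε ⟨p.1, h⟩ w}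
  zero_mem' := ⟨Δ.zero_mem, fun w => by
    have : (⟨(0 : V), Δ.zero_mem⟩ : Δ) = 0 := rfl
    simp [this]⟩
  add_mem' := by
    rintro ⟨v, ξ⟩ ⟨v', ξ'⟩ ⟨hv, hξ⟩ ⟨hv', hξ'⟩
    refine ⟨Δ.add_mem hv hv', fun w => ?_⟩
    show ξ w + ξ' w = ε ⟨v + v', _⟩ w
    have : (⟨v + v', Δ.add_mem hv hv'⟩ : Δ) = ⟨v, hv⟩ + ⟨v', hv'⟩ := rfl
    rw [this, map_add, LinearMap.add_apply, hξ w, hξ' w]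
  smul_mem' := by
    rintro c ⟨v, ξ⟩ ⟨hv, hξ⟩
    refine ⟨Δ.smul_mem c hv, fun w => ?_⟩
    show c • ξ w = ε ⟨c • v, _⟩ w
    have : (⟨c • v, Δ.smul_mem c hv⟩ : Δ) = c • ⟨v, hv⟩ := rfl
    rw [this, map_smul, LinearMap.smul_apply, hξ w]

/-- Explicit equivalence `L(Δ,ε) ≃ Δ × Δᵃⁿⁿ`, given a linear projection `P` onto `Δ`. -/
noncomputable def graphEquiv {V : Type*} [AddCommGroup V] [Module ℝ V]
    (Δ : Submodule ℝ V) (ε : Δ →ₗ[ℝ] Δ →ₗ[ℝ] ℝ)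
    (P : V →ₗ[ℝ] Δ) (hP : ∀ x : Δ, P x.1 = x) :
    graphL Δ ε ≃ₗ[ℝ] Δ × Δ.dualAnnihilator where
  toFun x := (⟨x.1.1, x.2.1⟩,
    ⟨x.1.2 - (ε ⟨x.1.1, x.2.1⟩).comp P, by
      rw [Submodule.mem_dualAnnihilator]
      intro w hw
      have h2 := x.2.2 ⟨w, hw⟩
      simp only [LinearMap.sub_apply, LinearMap.comp_apply]
      rw [h2, hP ⟨w, hw⟩]
      ring⟩)
  invFun y := ⟨(y.1.1, (ε y.1).comp P + y.2.1), y.1.2, fun w => by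
    have := (Submodule.mem_dualAnnihilator y.2.1).mp y.2.2 w w.2
    simp only [LinearMap.add_apply, LinearMap.comp_apply]
    rw [this, hP w]
    have : (⟨(y.1 : V), y.1.2⟩ : Δ) = y.1 := rfl
    rw [this]
    ring⟩
  map_add' x y := by
    refine Prod.ext rfl (Subtype.ext ?_)
    have h : (⟨((x + y : graphL Δ ε) : V × Module.Dual ℝ V).1, (x + y).2.1⟩ : Δ)
        = ⟨x.1.1, x.2.1⟩ + ⟨y.1.1, y.2.1⟩ := Subtype.ext rfl
    show ((x + y : graphL Δ ε) : V × Module.Dual ℝ V).2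
        - (ε ⟨((x + y : graphL Δ ε) : V × Module.Dual ℝ V).1, (x + y).2.1⟩).comp P = _
    rw [h, map_add]
    show (x.1.2 + y.1.2) - _ = (x.1.2 - _) + (y.1.2 - _)
    rw [LinearMap.add_comp]
    abel
  map_smul' c x := by
    refine Prod.ext rfl (Subtype.ext ?_)
    have h : (⟨((c • x : graphL Δ ε) : V × Module.Dual ℝ V).1, (c • x).2.1⟩ : Δ)
        = c • ⟨x.1.1, x.2.1⟩ := Subtype.ext rfl
    show ((c • x : graphL Δ ε) : V × Module.Dual ℝ V).2
        - (ε ⟨((c • x : graphL Δ ε) : V × Module.Dual ℝ V).1, (c • x).2.1⟩).comp P = _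
    rw [h, map_smul]
    show c • x.1.2 - _ = c • (x.1.2 - _)
    rw [smul_sub, LinearMap.smul_comp]
  left_inv x := by
    refine Subtype.ext (Prod.ext rfl ?_)
    show (ε ⟨x.1.1, x.2.1⟩).comp P + (x.1.2 - (ε ⟨x.1.1, x.2.1⟩).comp P) = x.1.2
    abel
  right_inv y := by
    refine Prod.ext rfl (Subtype.ext ?_)
    show ((ε y.1).comp P + y.2.1) - (ε ⟨(y.1 : V), _⟩).comp P = y.2.1
    have : (⟨(y.1 : V), y.1.2⟩ : Δ) = y.1 := rfl
    rw [this]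
    abel

set_option maxHeartbeats 1000000 in
/-- Given a subspace `Δ ⊆ V` and an alternating bilinear form `ε` on `Δ`, the set
`L(Δ,ε) = {(v,ξ) : v ∈ Δ, ξ|_Δ = ε(v,·)}` is a Lagrangian subspace of `V ⊕ V*`
whose projection to `V` equals `Δ`. -/
theorem graph_of_form_is_lagrangian
    (V : Type*) [AddCommGroup V] [Module ℝ V] [FiniteDimensional ℝ V]
    (Δ : Submodule ℝ V) (ε : Δ →ₗ[ℝ] Δ →ₗ[ℝ] ℝ) (halt : ∀ x, ε x x = 0) :
    ∃ L : Submodule ℝ (V × Module.Dual ℝ V),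
      (L : Set (V × Module.Dual ℝ V)) =
        {p | ∃ h : p.1 ∈ Δ, ∀ w : Δ, p.2 w = ε ⟨p.1, h⟩ w} ∧
      IsLagrangian L ∧
      Submodule.map (LinearMap.fst ℝ V (Module.Dual ℝ V)) L = Δ := by
  have hanti : ∀ x y : Δ, ε x y + ε y x = 0 := by
    intro x y
    have h := halt (x + y)
    simp only [map_add, LinearMap.add_apply] at h
    rw [halt x, halt y] at h
    linarith
  refine ⟨graphL Δ ε, rfl, ⟨?_, ?_⟩, ?_⟩
  · -- dimension count
    obtain ⟨Δ', hc⟩ := Submodule.exists_isCompl Δ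
    have hP : ∀ x : Δ, (Δ.linearProjOfIsCompl Δ' hc) x.1 = x := fun x => by
      exact Submodule.projectionOnto_apply_left hc x
    have heq : Module.finrank ℝ (graphL Δ ε) = Module.finrank ℝ (Δ × Δ.dualAnnihilator) :=
      (graphEquiv Δ ε (Δ.linearProjOfIsCompl Δ' hc) hP).finrank_eq
    haveI : FiniteDimensional ℝ (Module.Dual ℝ V) := inferInstance
    haveI : FiniteDimensional ℝ Δ.dualAnnihilator :=
      FiniteDimensional.finiteDimensional_submodule Δ.dualAnnihilator
    haveI : Module.Free ℝ Δ.dualAnnihilator :=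
      Module.Free.of_basis (Module.Basis.ofVectorSpace ℝ Δ.dualAnnihilator)
    haveI : Module.Free ℝ Δ := Module.Free.of_basis (Module.Basis.ofVectorSpace ℝ Δ)
    rw [heq, Module.finrank_prod]
    have h5 := Submodule.finrank_quotient_add_finrank Δ
    have h6 : Module.finrank ℝ Δ.dualAnnihilator = Module.finrank ℝ (V ⧸ Δ) :=
      (Subspace.quotEquivAnnihilator Δ).finrank_eq.symm
    omega
  · -- isotropy
    rintro ⟨v, ξ⟩ ⟨hv, hξ⟩ ⟨w, η⟩ ⟨hw, hη⟩
    unfold diracPairing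
    simp only
    rw [hξ ⟨w, hw⟩, hη ⟨v, hv⟩, hanti ⟨v, hv⟩ ⟨w, hw⟩]
    norm_num
  · -- projection is Δ
    apply le_antisymm
    · rintro v ⟨⟨w, ξ⟩, ⟨hw, _⟩, rfl⟩
      exact hw
    · intro v hv
      obtain ⟨g, hg⟩ := LinearMap.exists_extend (ε ⟨v, hv⟩)
      refine ⟨(v, g), ⟨hv, fun w => ?_⟩, rfl⟩
      have := congrFun (congrArg DFunLike.coe hg) w
      simpa using this
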